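/- arXiv:1207.2977 — 4 statements merged into one kernel-verified Lean document; each statement's English description precedes it below -/
import Mathlib

section
/- Let G be the simple graph on vertex set {0, 1, 2, 3} with edge set {{0,1}, {1,2}, {2,3}, {3,0}, {0,2}} (the graph K4 minus one edge, which is the unique maximal outerplanar graph of order 4). Then for every integer k ≥ 0, G is k-edge magic if and only if k ≡ 2 (mod 4). -/
open scoped Classical in
/-- A finite simple graph `G` on a finite vertex type is `k`-edge magic if there is a
labeling of its edges that is a bijection onto `{k, k+1, ..., k+q-1}` (where `q` is the
number of edges) such that all the induced vertex sums (the sum of the labels of the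
edges incident to a vertex) are congruent modulo the number of vertices. -/
def IsKEdgeMagic {V : Type*} [Fintype V] (G : SimpleGraph V) (k : ℕ) : Prop :=
  ∃ f : Sym2 V → ℕ,
    Set.BijOn f G.edgeSet ((fun i => k + i) '' Set.Iio G.edgeFinset.card) ∧
    ∃ c : ZMod (Fintype.card V),
      ∀ v : V, ((∑ e ∈ G.incidenceFinset v, f e : ℕ) : ZMod (Fintype.card V)) = c

/-- A concrete simple graph on `Fin 4`. -/
def G2 : SimpleGraph (Fin 4) where
  Adj a b := a ≠ b ∧ s(a,b) ∈ ({s(0,1), s(1,2), s(2,3), s(3,0), s(0,2)} : Finset (Sym2 (Fin 4)))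
  symm := ⟨fun a b h => ⟨h.1.symm, by rw [show s(b,a) = s(a,b) from Sym2.eq_swap]; exact h.2⟩⟩
  loopless := ⟨fun a h => h.1 rfl⟩

lemma G2_edgeSet_eq :
    G2.edgeSet = ↑({s(0,1), s(1,2), s(2,3), s(3,0), s(0,2)} : Finset (Sym2 (Fin 4))) := by
  ext e
  induction e using Sym2.ind with
  | _ a b =>
    rw [SimpleGraph.mem_edgeSet, Finset.mem_coe]
    show (a ≠ b ∧ s(a,b) ∈ ({s(0,1), s(1,2), s(2,3), s(3,0), s(0,2)} : Finset (Sym2 (Fin 4)))) ↔ _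
    revert a b; decide

section
open scoped Classical

lemma G2_edgeFinset_eq :
    G2.edgeFinset = ({s(0,1), s(1,2), s(2,3), s(3,0), s(0,2)} : Finset (Sym2 (Fin 4))) := by
  ext e
  rw [SimpleGraph.mem_edgeFinset, G2_edgeSet_eq, Finset.mem_coe]

lemma G2_card_eq : G2.edgeFinset.card = 5 := by rw [G2_edgeFinset_eq]; decide

end

instance : DecidableRel G2.Adj := fun a b =>
  decidable_of_iff (a ≠ b ∧ s(a,b) ∈ ({s(0,1), s(1,2), s(2,3), s(3,0), s(0,2)} :
    Finset (Sym2 (Fin 4)))) Iff.rfl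

lemma G2_inc_eq (v : Fin 4) {N : Fintype (G2.neighborSet v)} {D : DecidableEq (Fin 4)}
    (F : Finset (Sym2 (Fin 4)))
    (h : ∀ a b : Fin 4, (G2.Adj a b ∧ v ∈ s(a,b)) ↔ s(a,b) ∈ F) :
    @SimpleGraph.incidenceFinset _ G2 v N D = F := by
  ext e
  rw [SimpleGraph.mem_incidenceFinset]
  induction e using Sym2.ind with
  | _ a b =>
    rw [SimpleGraph.incidenceSet, Set.mem_sep_iff, SimpleGraph.mem_edgeSet, ← h a b]

lemma G2_key : ∀ (K : ZMod 4) (i0 i1 i2 i3 i4 : Fin 5),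
  (i0 ≠ i1 ∧ i0 ≠ i2 ∧ i0 ≠ i3 ∧ i0 ≠ i4 ∧ i1 ≠ i2 ∧ i1 ≠ i3 ∧ i1 ≠ i4 ∧ i2 ≠ i3 ∧
    i2 ≠ i4 ∧ i3 ≠ i4) →
  ((K + (i0.val : ZMod 4)) + ((K + (i3.val : ZMod 4)) + (K + (i4.val : ZMod 4))) =
    (K + (i0.val : ZMod 4)) + (K + (i1.val : ZMod 4))) →
  ((K + (i1.val : ZMod 4)) + ((K + (i2.val : ZMod 4)) + (K + (i4.val : ZMod 4))) =
    (K + (i0.val : ZMod 4)) + (K + (i1.val : ZMod 4))) →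
  ((K + (i2.val : ZMod 4)) + (K + (i3.val : ZMod 4)) =
    (K + (i0.val : ZMod 4)) + (K + (i1.val : ZMod 4))) →
  K = 2 := by decide

lemma G2_key_nat (k i0 i1 i2 i3 i4 : ℕ) (h0 : i0 < 5) (h1 : i1 < 5) (h2 : i2 < 5)
    (h3 : i3 < 5) (h4 : i4 < 5)
    (hne : i0 ≠ i1 ∧ i0 ≠ i2 ∧ i0 ≠ i3 ∧ i0 ≠ i4 ∧ i1 ≠ i2 ∧ i1 ≠ i3 ∧ i1 ≠ i4 ∧ i2 ≠ i3 ∧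
      i2 ≠ i4 ∧ i3 ≠ i4)
    (e1 : (((k+i0) + ((k+i3)+(k+i4)) : ℕ) : ZMod 4) = (((k+i0)+(k+i1) : ℕ) : ZMod 4))
    (e2 : (((k+i1) + ((k+i2)+(k+i4)) : ℕ) : ZMod 4) = (((k+i0)+(k+i1) : ℕ) : ZMod 4))
    (e3 : (((k+i2) + (k+i3) : ℕ) : ZMod 4) = (((k+i0)+(k+i1) : ℕ) : ZMod 4)) :
    (k : ZMod 4) = ((2:ℕ) : ZMod 4) := by
  push_cast at e1 e2 e3
  have := G2_key (k : ZMod 4) ⟨i0, h0⟩ ⟨i1, h1⟩ ⟨i2, h2⟩ ⟨i3, h3⟩ ⟨i4, h4⟩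
    (by simp only [ne_eq, Fin.mk.injEq]; exact hne) e1 e2 e3
  rw [this]; norm_num

def fG2 (k : ℕ) : Sym2 (Fin 4) → ℕ := fun e =>
  if e = s(0,1) then k+2 else if e = s(1,2) then k+1 else if e = s(2,3) then k+4
  else if e = s(3,0) then k+3 else if e = s((0:Fin 4),(2:Fin 4)) then k else 0

lemma fG2_1 (k : ℕ) : fG2 k s(0,1) = k+2 := by rw [fG2, if_pos rfl]
lemma fG2_2 (k : ℕ) : fG2 k s(1,2) = k+1 := by rw [fG2, if_neg (by decide), if_pos rfl]
lemma fG2_3 (k : ℕ) : fG2 k s(2,3) = k+4 := by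
  rw [fG2, if_neg (by decide), if_neg (by decide), if_pos rfl]
lemma fG2_4 (k : ℕ) : fG2 k s(3,0) = k+3 := by
  rw [fG2, if_neg (by decide), if_neg (by decide), if_neg (by decide), if_pos rfl]
lemma fG2_5 (k : ℕ) : fG2 k s(0,2) = k := by
  rw [fG2, if_neg (by decide), if_neg (by decide), if_neg (by decide), if_neg (by decide),
    if_pos rfl]

theorem kEdgeMagic_iff_2 (k : ℕ) : IsKEdgeMagic G2 k ↔ k ≡ 2 [MOD 4] := by
  constructor
  · rintro ⟨f, hbij, c, hc⟩
    rw [G2_card_eq, G2_edgeSet_eq] at hbij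
    -- membership of the five edges
    have he0 : s((0:Fin 4),(1:Fin 4)) ∈ (↑({s(0,1), s(1,2), s(2,3), s(3,0), s(0,2)} :
        Finset (Sym2 (Fin 4))) : Set (Sym2 (Fin 4))) := by rw [Finset.mem_coe]; decide
    have he1 : s((1:Fin 4),(2:Fin 4)) ∈ (↑({s(0,1), s(1,2), s(2,3), s(3,0), s(0,2)} :
        Finset (Sym2 (Fin 4))) : Set (Sym2 (Fin 4))) := by rw [Finset.mem_coe]; decide
    have he2 : s((2:Fin 4),(3:Fin 4)) ∈ (↑({s(0,1), s(1,2), s(2,3), s(3,0), s(0,2)} :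
        Finset (Sym2 (Fin 4))) : Set (Sym2 (Fin 4))) := by rw [Finset.mem_coe]; decide
    have he3 : s((3:Fin 4),(0:Fin 4)) ∈ (↑({s(0,1), s(1,2), s(2,3), s(3,0), s(0,2)} :
        Finset (Sym2 (Fin 4))) : Set (Sym2 (Fin 4))) := by rw [Finset.mem_coe]; decide
    have he4 : s((0:Fin 4),(2:Fin 4)) ∈ (↑({s(0,1), s(1,2), s(2,3), s(3,0), s(0,2)} :
        Finset (Sym2 (Fin 4))) : Set (Sym2 (Fin 4))) := by rw [Finset.mem_coe]; decide
    obtain ⟨i0, hi0, hf0⟩ := hbij.1 he0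
    obtain ⟨i1, hi1, hf1⟩ := hbij.1 he1
    obtain ⟨i2, hi2, hf2⟩ := hbij.1 he2
    obtain ⟨i3, hi3, hf3⟩ := hbij.1 he3
    obtain ⟨i4, hi4, hf4⟩ := hbij.1 he4
    rw [Set.mem_Iio] at hi0 hi1 hi2 hi3 hi4
    replace hf0 : k + i0 = f s(0,1) := hf0
    replace hf1 : k + i1 = f s(1,2) := hf1
    replace hf2 : k + i2 = f s(2,3) := hf2
    replace hf3 : k + i3 = f s(3,0) := hf3
    replace hf4 : k + i4 = f s(0,2) := hf4
    have hinj := hbij.2.1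
    -- pairwise distinctness of offsets
    have dne : ∀ (a b : Sym2 (Fin 4)), a ∈ (↑({s(0,1), s(1,2), s(2,3), s(3,0), s(0,2)} :
        Finset (Sym2 (Fin 4))) : Set (Sym2 (Fin 4))) → b ∈ _ → a ≠ b → f a ≠ f b :=
      fun a b ha hb hab h => hab (hinj ha hb h)
    have hne : i0 ≠ i1 ∧ i0 ≠ i2 ∧ i0 ≠ i3 ∧ i0 ≠ i4 ∧ i1 ≠ i2 ∧ i1 ≠ i3 ∧ i1 ≠ i4 ∧
        i2 ≠ i3 ∧ i2 ≠ i4 ∧ i3 ≠ i4 := by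
      refine ⟨?_, ?_, ?_, ?_, ?_, ?_, ?_, ?_, ?_, ?_⟩ <;>
        (intro h; subst h) <;>
        [exact dne _ _ he0 he1 (by decide) (hf0.symm.trans hf1);
         exact dne _ _ he0 he2 (by decide) (hf0.symm.trans hf2);
         exact dne _ _ he0 he3 (by decide) (hf0.symm.trans hf3);
         exact dne _ _ he0 he4 (by decide) (hf0.symm.trans hf4);
         exact dne _ _ he1 he2 (by decide) (hf1.symm.trans hf2);
         exact dne _ _ he1 he3 (by decide) (hf1.symm.trans hf3);
         exact dne _ _ he1 he4 (by decide) (hf1.symm.trans hf4);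
         exact dne _ _ he2 he3 (by decide) (hf2.symm.trans hf3);
         exact dne _ _ he2 he4 (by decide) (hf2.symm.trans hf4);
         exact dne _ _ he3 he4 (by decide) (hf3.symm.trans hf4)]
    -- compute the vertex sums
    have h0 := hc 0
    have h1 := hc 1
    have h2 := hc 2
    have h3 := hc 3
    rw [G2_inc_eq 0 ({s(0,1), s(3,0), s(0,2)}) (by decide), Finset.sum_insert (by decide), Finset.sum_insert (by decide),
      Finset.sum_singleton, ← hf0, ← hf3, ← hf4] at h0
    rw [G2_inc_eq 1 ({s(0,1), s(1,2)}) (by decide), Finset.sum_insert (by decide), Finset.sum_singleton, ← hf0, ← hf1] at h1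
    rw [G2_inc_eq 2 ({s(1,2), s(2,3), s(0,2)}) (by decide), Finset.sum_insert (by decide), Finset.sum_insert (by decide),
      Finset.sum_singleton, ← hf1, ← hf2, ← hf4] at h2
    rw [G2_inc_eq 3 ({s(2,3), s(3,0)}) (by decide), Finset.sum_insert (by decide), Finset.sum_singleton, ← hf2, ← hf3] at h3
    have h01 := h0.trans h1.symm
    have h21 := h2.trans h1.symm
    have h31 := h3.trans h1.symm
    -- transfer to ZMod 4
    have m01 : ((k+i0) + ((k+i3) + (k+i4))) ≡ ((k+i0) + (k+i1)) [MOD 4] := by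
      have := (ZMod.natCast_eq_natCast_iff _ _ _).mp h01
      rwa [Fintype.card_fin] at this
    have m21 : ((k+i1) + ((k+i2) + (k+i4))) ≡ ((k+i0) + (k+i1)) [MOD 4] := by
      have := (ZMod.natCast_eq_natCast_iff _ _ _).mp h21
      rwa [Fintype.card_fin] at this
    have m31 : ((k+i2) + (k+i3)) ≡ ((k+i0) + (k+i1)) [MOD 4] := by
      have := (ZMod.natCast_eq_natCast_iff _ _ _).mp h31
      rwa [Fintype.card_fin] at this
    have := G2_key_nat k i0 i1 i2 i3 i4 hi0 hi1 hi2 hi3 hi4 hne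
      ((ZMod.natCast_eq_natCast_iff _ _ _).mpr m01)
      ((ZMod.natCast_eq_natCast_iff _ _ _).mpr m21)
      ((ZMod.natCast_eq_natCast_iff _ _ _).mpr m31)
    exact (ZMod.natCast_eq_natCast_iff _ _ _).mp this
  · intro hk
    have hk' : k % 4 = 2 := by
      have := hk
      unfold Nat.ModEq at this
      omega
    refine ⟨fG2 k, ?_, ((2*k+3 : ℕ) : ZMod (Fintype.card (Fin 4))), ?_⟩
    · rw [G2_card_eq, G2_edgeSet_eq]
      have himg : ((fun i => k + i) '' Set.Iio 5) =
          ↑({k+2, k+1, k+4, k+3, k} : Finset ℕ) := by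
        ext n
        simp only [Set.mem_image, Set.mem_Iio, Finset.coe_insert, Set.mem_insert_iff,
          Finset.coe_singleton, Set.mem_singleton_iff]
        constructor
        · rintro ⟨i, hi, rfl⟩; omega
        · rintro (rfl | rfl | rfl | rfl | rfl)
          · exact ⟨2, by omega, rfl⟩
          · exact ⟨1, by omega, rfl⟩
          · exact ⟨4, by omega, rfl⟩
          · exact ⟨3, by omega, rfl⟩
          · exact ⟨0, by omega, rfl⟩
      rw [himg]
      refine ⟨?_, ?_, ?_⟩
      · intro e he
        rw [Finset.mem_coe] at he
        fin_cases he <;> simp [fG2_1, fG2_2, fG2_3, fG2_4, fG2_5]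
      · intro a ha b hb hab
        rw [Finset.mem_coe] at ha hb
        fin_cases ha <;> fin_cases hb <;>
          simp only [fG2_1, fG2_2, fG2_3, fG2_4, fG2_5] at hab <;> first | rfl | omega
      · intro n hn
        rw [Finset.mem_coe] at hn
        simp only [Finset.mem_insert, Finset.mem_singleton] at hn
        rcases hn with rfl | rfl | rfl | rfl | rfl
        · exact ⟨s(0,1), by rw [Finset.mem_coe]; decide, fG2_1 _⟩
        · exact ⟨s(1,2), by rw [Finset.mem_coe]; decide, fG2_2 _⟩
        · exact ⟨s(2,3), by rw [Finset.mem_coe]; decide, fG2_3 _⟩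
        · exact ⟨s(3,0), by rw [Finset.mem_coe]; decide, fG2_4 _⟩
        · exact ⟨s(0,2), by rw [Finset.mem_coe]; decide, fG2_5 _⟩
    · intro v
      have goal4 : ∀ m : ℕ, m % 4 = (2*k+3) % 4 →
          ((m : ℕ) : ZMod (Fintype.card (Fin 4))) = ((2*k+3 : ℕ) : ZMod (Fintype.card (Fin 4))) := by
        intro m hm
        refine (ZMod.natCast_eq_natCast_iff _ _ _).mpr ?_
        rw [Fintype.card_fin]
        exact hm
      have hv : v = 0 ∨ v = 1 ∨ v = 2 ∨ v = 3 := by revert v; decide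
      rcases hv with rfl | rfl | rfl | rfl
      · rw [G2_inc_eq 0 ({s(0,1), s(3,0), s(0,2)}) (by decide), Finset.sum_insert (by decide), Finset.sum_insert (by decide),
          Finset.sum_singleton, fG2_1, fG2_4, fG2_5]
        exact goal4 _ (by omega)
      · rw [G2_inc_eq 1 ({s(0,1), s(1,2)}) (by decide), Finset.sum_insert (by decide), Finset.sum_singleton, fG2_1, fG2_2]
        exact goal4 _ (by omega)
      · rw [G2_inc_eq 2 ({s(1,2), s(2,3), s(0,2)}) (by decide), Finset.sum_insert (by decide), Finset.sum_insert (by decide),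
          Finset.sum_singleton, fG2_2, fG2_3, fG2_5]
        exact goal4 _ (by omega)
      · rw [G2_inc_eq 3 ({s(2,3), s(3,0)}) (by decide), Finset.sum_insert (by decide), Finset.sum_singleton, fG2_3, fG2_4]
        exact goal4 _ (by omega)
end

section
/- Let G be the simple graph on vertex set {0, 1, 2, 3, 4} with edge set {{0,1}, {1,2}, {2,3}, {3,4}, {4,0}, {0,2}, {0,3}} (the fan obtained by triangulating a pentagon, which is the unique maximal outerplanar graph of order 5 up to isomorphism). Then for every integer k ≥ 0, G is k-edge magic if and only if k ≡ 2 (mod 5). -/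
/-- A concrete simple graph on `Fin 5`. -/
def G3 : SimpleGraph (Fin 5) where
  Adj a b := a ≠ b ∧ s(a,b) ∈ ({s(0,1), s(1,2), s(2,3), s(3,4), s(4,0), s(0,2), s(0,3)} : Finset (Sym2 (Fin 5)))
  symm := ⟨fun a b h => ⟨h.1.symm, by rw [show s(b,a) = s(a,b) from Sym2.eq_swap]; exact h.2⟩⟩
  loopless := ⟨fun a h => h.1 rfl⟩

def Fe : Finset (Sym2 (Fin 5)) := {s(0,1), s(1,2), s(2,3), s(3,4), s(4,0), s(0,2), s(0,3)}

lemma edgeSet_eq3 : G3.edgeSet = ↑Fe := by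
  ext e
  induction e using Sym2.ind with
  | _ a b =>
    rw [SimpleGraph.mem_edgeSet]
    show (a ≠ b ∧ s(a,b) ∈ Fe) ↔ _
    exact ⟨fun h => h.2, fun h => ⟨by revert h; revert a b; decide, h⟩⟩

lemma edgeFinset_eq3 (inst : Fintype ↑G3.edgeSet) : G3.edgeFinset = Fe := by
  ext e; simp [SimpleGraph.mem_edgeFinset, edgeSet_eq3]

lemma card_eq3 (inst : Fintype ↑G3.edgeSet) : G3.edgeFinset.card = 7 := by
  rw [edgeFinset_eq3]; decide

lemma inc_eq3 (v : Fin 5) (inst : Fintype ↑(G3.neighborSet v)) (de : DecidableEq (Fin 5)) :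
    G3.incidenceFinset v = Fe.filter (fun e => v ∈ e) := by
  ext e
  rw [SimpleGraph.mem_incidenceFinset, Finset.mem_filter]
  show e ∈ G3.edgeSet ∧ v ∈ e ↔ _
  rw [edgeSet_eq3]
  exact Iff.rfl

lemma inc0' : Fe.filter (fun e => (0:Fin 5) ∈ e) = {s(0,1), s(4,0), s(0,2), s(0,3)} := by decide
lemma inc1' : Fe.filter (fun e => (1:Fin 5) ∈ e) = {s(0,1), s(1,2)} := by decide
lemma inc2' : Fe.filter (fun e => (2:Fin 5) ∈ e) = {s(1,2), s(2,3), s(0,2)} := by decide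
lemma inc3' : Fe.filter (fun e => (3:Fin 5) ∈ e) = {s(2,3), s(3,4), s(0,3)} := by decide
lemma inc4' : Fe.filter (fun e => (4:Fin 5) ∈ e) = {s(3,4), s(4,0)} := by decide

def g (e : Sym2 (Fin 5)) : ℕ :=
  if e = s(0,1) then 0 else if e = s(1,2) then 2 else if e = s(2,3) then 5 else
  if e = s(3,4) then 1 else if e = s(4,0) then 6 else if e = s(0,2) then 3 else
  if e = s(0,3) then 4 else 7

lemma g01 : g s(0,1) = 0 := by decide
lemma g12 : g s(1,2) = 2 := by decide
lemma g23 : g s(2,3) = 5 := by decide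
lemma g34 : g s(3,4) = 1 := by decide
lemma g40 : g s(4,0) = 6 := by decide
lemma g02 : g s(0,2) = 3 := by decide
lemma g03 : g s(0,3) = 4 := by decide

lemma sum_Fe (f : Sym2 (Fin 5) → ℕ) :
    ∑ e ∈ Fe, f e = f s(0,1) + f s(1,2) + f s(2,3) + f s(3,4) + f s(4,0) + f s(0,2) + f s(0,3) := by
  show ∑ e ∈ ({s(0,1), s(1,2), s(2,3), s(3,4), s(4,0), s(0,2), s(0,3)} : Finset (Sym2 (Fin 5))), f e = _
  rw [Finset.sum_insert (by decide), Finset.sum_insert (by decide), Finset.sum_insert (by decide),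
    Finset.sum_insert (by decide), Finset.sum_insert (by decide), Finset.sum_insert (by decide),
    Finset.sum_singleton]
  ring

theorem kEdgeMagic_iff_3 (k : ℕ) : IsKEdgeMagic G3 k ↔ k ≡ 2 [MOD 5] := by
  rw [IsKEdgeMagic, card_eq3 _]
  constructor
  · rintro ⟨f, hbij, c, hc⟩
    have h0 := hc 0; have h1 := hc 1; have h2 := hc 2; have h3 := hc 3; have h4 := hc 4
    rw [inc_eq3 _ _ _, Finset.filter_congr_decidable, inc0'] at h0
    rw [inc_eq3 _ _ _, Finset.filter_congr_decidable, inc1'] at h1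
    rw [inc_eq3 _ _ _, Finset.filter_congr_decidable, inc2'] at h2
    rw [inc_eq3 _ _ _, Finset.filter_congr_decidable, inc3'] at h3
    rw [inc_eq3 _ _ _, Finset.filter_congr_decidable, inc4'] at h4
    try simp only [Fintype.card_fin] at h0 h1 h2 h3 h4
    rw [Finset.sum_insert (by decide), Finset.sum_insert (by decide),
      Finset.sum_insert (by decide), Finset.sum_singleton] at h0
    rw [Finset.sum_insert (by decide), Finset.sum_singleton] at h1
    rw [Finset.sum_insert (by decide), Finset.sum_insert (by decide),
      Finset.sum_singleton] at h2
    rw [Finset.sum_insert (by decide), Finset.sum_insert (by decide),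
      Finset.sum_singleton] at h3
    rw [Finset.sum_insert (by decide), Finset.sum_singleton] at h4
    have hinj : Set.InjOn f ↑Fe := by rw [← edgeSet_eq3]; exact hbij.injOn
    have himg : Fe.image f = (Finset.Iio 7).image (fun i => k + i) := by
      apply Finset.coe_injective
      rw [Finset.coe_image, Finset.coe_image, Finset.coe_Iio, ← edgeSet_eq3, hbij.image_eq]
    have hsum : ∑ e ∈ Fe, f e = 7 * k + 21 := by
      have hb := Finset.sum_image (g := f) (f := id) (s := Fe)
        (fun x hx y hy h => hinj hx hy h)
      rw [himg, Finset.sum_image (fun x _ y _ h => by omega)] at hb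
      simp only [id] at hb
      rw [← hb]
      rw [show (Finset.Iio 7 : Finset ℕ) = {0,1,2,3,4,5,6} from by decide]
      rw [Finset.sum_insert (by decide), Finset.sum_insert (by decide),
        Finset.sum_insert (by decide), Finset.sum_insert (by decide),
        Finset.sum_insert (by decide), Finset.sum_insert (by decide), Finset.sum_singleton]
      try simp only [id]
      omega
    rw [sum_Fe] at hsum
    have hx : 14 * (k : ZMod 5) + 42 = 0 := by
      have hs2 := congrArg (Nat.cast : ℕ → ZMod 5) hsum
      push_cast at hs2 h0 h1 h2 h3 h4
      have h5 : (5 : ZMod 5) = 0 := by decide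
      clear hc
      revert c
      rw [Fintype.card_fin]
      intro c h0 h1 h2 h3 h4
      linear_combination h0 + h1 + h2 + h3 + h4 - 2 * hs2 + c * h5
    have hk5 : ((k : ZMod 5)) = ((2 : ℕ) : ZMod 5) := by
      revert hx
      generalize (k : ZMod 5) = x
      revert x; decide
    exact (ZMod.natCast_eq_natCast_iff k 2 5).mp hk5
  · intro hk
    have hk5 : ((k : ZMod 5)) = 2 := by
      have := (ZMod.natCast_eq_natCast_iff k 2 5).mpr hk
      simpa using this
    refine ⟨fun e => k + g e, ?_, ?_⟩
    · rw [edgeSet_eq3]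
      refine ⟨?_, ?_, ?_⟩
      · intro e he
        rw [Finset.mem_coe] at he
        fin_cases he <;> refine ⟨_, ?_, rfl⟩ <;>
          simp [Set.mem_Iio, g01, g12, g23, g34, g40, g02, g03]
      · intro a ha b hb hab
        rw [Finset.mem_coe] at ha hb
        fin_cases ha <;> fin_cases hb <;>
          first
          | rfl
          | (exfalso; simp only [g01, g12, g23, g34, g40, g02, g03] at hab; omega)
      · rintro x ⟨i, hi, rfl⟩
        simp only [Set.mem_Iio] at hi
        interval_cases i
        · exact ⟨s(0,1), by rw [Finset.mem_coe]; decide, by simp [g01]⟩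
        · exact ⟨s(3,4), by rw [Finset.mem_coe]; decide, by simp [g34]⟩
        · exact ⟨s(1,2), by rw [Finset.mem_coe]; decide, by simp [g12]⟩
        · exact ⟨s(0,2), by rw [Finset.mem_coe]; decide, by simp [g02]⟩
        · exact ⟨s(0,3), by rw [Finset.mem_coe]; decide, by simp [g03]⟩
        · exact ⟨s(2,3), by rw [Finset.mem_coe]; decide, by simp [g23]⟩
        · exact ⟨s(4,0), by rw [Finset.mem_coe]; decide, by simp [g40]⟩
    · refine ⟨(1 : ZMod (Fintype.card (Fin 5))), fun v => ?_⟩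
      rw [inc_eq3 _ _ _, Finset.filter_congr_decidable]
      try simp only [Fintype.card_fin]
      fin_cases v
      · show (((∑ e ∈ Fe.filter (fun e => (0:Fin 5) ∈ e), (k + g e)) : ℕ) : ZMod 5) = 1
        rw [inc0', Finset.sum_insert (by decide), Finset.sum_insert (by decide),
          Finset.sum_insert (by decide), Finset.sum_singleton, g01, g40, g02, g03]
        push_cast
        rw [hk5]; decide
      · show (((∑ e ∈ Fe.filter (fun e => (1:Fin 5) ∈ e), (k + g e)) : ℕ) : ZMod 5) = 1
        rw [inc1', Finset.sum_insert (by decide), Finset.sum_singleton, g01, g12]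
        push_cast
        rw [hk5]; decide
      · show (((∑ e ∈ Fe.filter (fun e => (2:Fin 5) ∈ e), (k + g e)) : ℕ) : ZMod 5) = 1
        rw [inc2', Finset.sum_insert (by decide), Finset.sum_insert (by decide),
          Finset.sum_singleton, g12, g23, g02]
        push_cast
        rw [hk5]; decide
      · show (((∑ e ∈ Fe.filter (fun e => (3:Fin 5) ∈ e), (k + g e)) : ℕ) : ZMod 5) = 1
        rw [inc3', Finset.sum_insert (by decide), Finset.sum_insert (by decide),
          Finset.sum_singleton, g23, g34, g03]
        push_cast
        rw [hk5]; decide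
      · show (((∑ e ∈ Fe.filter (fun e => (4:Fin 5) ∈ e), (k + g e)) : ℕ) : ZMod 5) = 1
        rw [inc4', Finset.sum_insert (by decide), Finset.sum_singleton, g34, g40]
        push_cast
        rw [hk5]; decide
end

section
/- Let G be the simple graph on vertex set {0, 1, 2, 3, 4, 5, 6} whose edge set consists of the heptagon edges {{0,1}, {1,2}, {2,3}, {3,4}, {4,5}, {5,6}, {6,0}} together with the chords {{0,2}, {0,3}, {0,4}, {0,5}} (the fan triangulation of the heptagon, a maximal outerplanar graph of order 7). Then for every integer k ≥ 0, G is k-edge magic if and only if k ≡ 2 (mod 7). -/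
set_option synthInstance.maxSize 8000
set_option maxRecDepth 20000
set_option maxHeartbeats 1000000
set_option synthInstance.maxHeartbeats 1000000

/-- A concrete simple graph on `Fin 7`. -/
def G4 : SimpleGraph (Fin 7) where
  Adj a b := a ≠ b ∧ s(a,b) ∈ ({s(0,1), s(1,2), s(2,3), s(3,4), s(4,5), s(5,6), s(6,0), s(0,2), s(0,3), s(0,4), s(0,5)} : Finset (Sym2 (Fin 7)))
  symm := ⟨fun a b h => ⟨h.1.symm, by rw [show s(b,a) = s(a,b) from Sym2.eq_swap]; exact h.2⟩⟩
  loopless := ⟨fun a h => h.1 rfl⟩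

instance G4.adjDecidable : DecidableRel G4.Adj := fun a b => by
  unfold G4; simp only; infer_instance

/-- The edge set of `G4` as a concrete finset. -/
def E4 : Finset (Sym2 (Fin 7)) := {s(0,1), s(1,2), s(2,3), s(3,4), s(4,5), s(5,6), s(6,0), s(0,2), s(0,3), s(0,4), s(0,5)}

/-- The incidence finsets of `G4`, concretely. -/
def J4 : Fin 7 → Finset (Sym2 (Fin 7))
  | 0 => {s(0,1), s(6,0), s(0,2), s(0,3), s(0,4), s(0,5)}
  | 1 => {s(0,1), s(1,2)}
  | 2 => {s(1,2), s(2,3), s(0,2)}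
  | 3 => {s(2,3), s(3,4), s(0,3)}
  | 4 => {s(3,4), s(4,5), s(0,4)}
  | 5 => {s(4,5), s(5,6), s(0,5)}
  | 6 => {s(5,6), s(6,0)}

/-- A magic labeling offset pattern for `G4`. -/
def off4 : Sym2 (Fin 7) → ℕ := fun e =>
  if e = s(0,1) then 0 else if e = s(1,2) then 1 else if e = s(2,3) then 2
  else if e = s(3,4) then 6 else if e = s(4,5) then 3 else if e = s(5,6) then 8
  else if e = s(6,0) then 7 else if e = s(0,2) then 10 else if e = s(0,3) then 5
  else if e = s(0,4) then 4 else if e = s(0,5) then 9 else 11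

lemma G4_edgeFinset' : ∀ (inst : Fintype G4.edgeSet),
    @SimpleGraph.edgeFinset _ G4 inst = E4 := by
  intro inst
  ext e
  induction e with
  | _ a b =>
    rw [SimpleGraph.mem_edgeFinset, SimpleGraph.mem_edgeSet]
    clear inst
    show (a ≠ b ∧ s(a,b) ∈ E4) ↔ s(a,b) ∈ E4
    simp only [E4, Finset.mem_insert, Finset.mem_singleton, Sym2.eq_iff, ne_eq]
    revert a b
    decide

lemma G4_inc' : ∀ (v : Fin 7) (inst1 : Fintype (G4.neighborSet v)) (inst2 : DecidableEq (Fin 7)),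
    @SimpleGraph.incidenceFinset _ G4 v inst1 inst2 = J4 v := by
  intro v inst1 inst2
  ext e
  rw [SimpleGraph.incidenceFinset_eq_filter, G4_edgeFinset', Finset.mem_filter]
  induction e with
  | _ a b =>
    rw [Sym2.mem_iff]
    clear inst1 inst2
    fin_cases v <;>
      · simp only [E4, J4, Finset.mem_insert, Finset.mem_singleton, Sym2.eq_iff]
        revert a b
        decide

lemma sum_J4 (f : Sym2 (Fin 7) → ℕ) :
    ∑ v : Fin 7, ∑ e ∈ J4 v, f e = 2 * ∑ e ∈ E4, f e := by
  rw [Fin.sum_univ_seven]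
  rw [show J4 0 = {s(0,1), s(6,0), s(0,2), s(0,3), s(0,4), s(0,5)} from rfl,
      show J4 1 = {s(0,1), s(1,2)} from rfl,
      show J4 2 = {s(1,2), s(2,3), s(0,2)} from rfl,
      show J4 3 = {s(2,3), s(3,4), s(0,3)} from rfl,
      show J4 4 = {s(3,4), s(4,5), s(0,4)} from rfl,
      show J4 5 = {s(4,5), s(5,6), s(0,5)} from rfl,
      show J4 6 = {s(5,6), s(6,0)} from rfl, E4]
  simp +decide only [Finset.sum_insert, Finset.mem_insert, Finset.mem_singleton,
    Finset.sum_singleton]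
  ring

lemma natCast_eq_two_of (k : ℕ) (h : ((2 * (11 * k + 55) : ℕ) : ZMod 7) = 0) :
    k ≡ 2 [MOD 7] := by
  have h7 : (7 : ZMod 7) = 0 := by decide
  push_cast at h
  have hk : ((k : ZMod 7)) = ((2 : ℕ) : ZMod 7) := by
    push_cast
    linear_combination h + (-3 * (k : ZMod 7) - 16) * h7
  exact (ZMod.natCast_eq_natCast_iff k 2 7).mp hk

lemma vertex_sums (k : ℕ) (hk : k ≡ 2 [MOD 7]) (v : Fin 7) :
    ((∑ e ∈ J4 v, (k + off4 e) : ℕ) : ZMod 7) = 5 := by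
  have hk' : k % 7 = 2 % 7 := hk
  fin_cases v <;>
    · simp +decide only [J4, Finset.sum_insert, Finset.mem_insert,
        Finset.mem_singleton, Finset.sum_singleton]
      simp +decide only [off4, ite_true, ite_false]
      rw [show (5 : ZMod 7) = ((5 : ℕ) : ZMod 7) from rfl, ZMod.natCast_eq_natCast_iff]
      simp only [Nat.ModEq]
      omega

theorem kEdgeMagic_iff_4 (k : ℕ) : IsKEdgeMagic G4 k ↔ k ≡ 2 [MOD 7] := by
  constructor
  · rintro ⟨f, hbij, c, hc⟩
    simp only [G4_edgeFinset', show E4.card = 11 from rfl] at hbij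
    simp only [G4_inc'] at hc
    have hc7 : ∀ v : Fin 7, ((∑ e ∈ J4 v, f e : ℕ) : ZMod 7) = c := hc
    have hT : (fun i => k + i) '' Set.Iio 11 =
        ↑((Finset.range 11).image (fun i => k + i)) := by
      rw [Finset.coe_image, Finset.coe_range]
    rw [hT, ← SimpleGraph.coe_edgeFinset] at hbij
    simp only [G4_edgeFinset'] at hbij
    have hsumE : ∑ e ∈ E4, f e = 11 * k + 55 := by
      have hEq := Finset.sum_nbij (s := E4)
        (t := Finset.image (fun i => k + i) (Finset.range 11)) (f := f) (g := id) (i := f)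
        (fun a ha => hbij.mapsTo ha) hbij.injOn hbij.surjOn (fun a _ => rfl)
      rw [hEq]
      rw [Finset.sum_image (fun x _ y _ h => by omega)]
      simp [Finset.sum_range_succ]
      ring
    have h0 : ((2 * (11 * k + 55) : ℕ) : ZMod 7) = 0 := by
      calc ((2 * (11 * k + 55) : ℕ) : ZMod 7)
          = ((∑ v : Fin 7, ∑ e ∈ J4 v, f e : ℕ) : ZMod 7) := by
            rw [sum_J4, hsumE]
        _ = ∑ v : Fin 7, ((∑ e ∈ J4 v, f e : ℕ) : ZMod 7) := by
            push_cast; rfl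
        _ = ∑ _v : Fin 7, (show ZMod 7 from c) := Finset.sum_congr rfl (fun v _ => hc7 v)
        _ = 7 * (show ZMod 7 from c) := by
            rw [Finset.sum_const, Finset.card_univ]
            show (7 : ℕ) • c = 7 * c
            rw [nsmul_eq_mul]
            norm_num
        _ = 0 := by rw [show (7 : ZMod 7) = 0 from rfl, zero_mul]
    exact natCast_eq_two_of k h0
  · intro hk
    refine ⟨fun e => k + off4 e, ?_, (5 : ZMod 7), ?_⟩
    · -- bijectivity
      simp only [G4_edgeFinset', show E4.card = 11 from rfl]
      have hT : (fun i => k + i) '' Set.Iio 11 =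
          ↑((Finset.range 11).image (fun i => k + i)) := by
        rw [Finset.coe_image, Finset.coe_range]
      rw [hT, ← SimpleGraph.coe_edgeFinset]
      simp only [G4_edgeFinset']
      have himg : E4.image (fun e => k + off4 e) =
          (Finset.range 11).image (fun i => k + i) := by
        rw [show (fun e => k + off4 e) = (fun i => k + i) ∘ off4 from rfl,
          ← Finset.image_image, show E4.image off4 = Finset.range 11 by decide]
      refine ⟨fun x hx => ?_, ?_, fun y hy => ?_⟩
      · rw [← himg]
        exact Finset.mem_coe.mpr (Finset.mem_image_of_mem _ hx)
      · apply Finset.injOn_of_card_image_eq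
        rw [himg, Finset.card_image_of_injective _ (fun x y h => by omega)]
        rfl
      · rw [← himg, Finset.coe_image] at hy
        exact hy
    · -- vertex sums
      intro v
      simp only [G4_inc']
      exact vertex_sums k hk v
end

section
/- For every integer n ≥ 3 and every integer k ≥ 0, the cycle graph C_n on n vertices is not k-edge magic. -/
open SimpleGraph Finset
open scoped Fin.CommRing Fin.NatCast Fin.IntCast

theorem cycle_not_kEdgeMagic (n : ℕ) (hn : 3 ≤ n) (k : ℕ) :
    ¬ IsKEdgeMagic (SimpleGraph.cycleGraph n) k := by
  obtain ⟨m, rfl⟩ : ∃ m, n = m + 3 := ⟨n - 3, by omega⟩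
  rintro ⟨f, hbij, c, hc⟩
  have hN : Fintype.card (Fin (m + 3)) = m + 3 := Fintype.card_fin _
  haveI : NeZero (Fintype.card (Fin (m + 3))) := ⟨by omega⟩
  -- edge count, generic over the Fintype instance
  have hq : ∀ inst : Fintype ((cycleGraph (m + 3)).edgeSet),
      (@SimpleGraph.edgeFinset _ (cycleGraph (m + 3)) inst).card = m + 3 := by
    intro inst
    have hi : inst = (cycleGraph (m + 3)).fintypeEdgeSet := Subsingleton.elim _ _
    subst hi
    have h2 := SimpleGraph.sum_degrees_eq_twice_card_edges (cycleGraph (m + 3))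
    simp only [cycleGraph_degree_three_le, Finset.sum_const, Finset.card_univ,
      Fintype.card_fin, smul_eq_mul] at h2
    omega
  -- the incidence set
  have hmem : ∀ (v : Fin (m + 3)) (e : Sym2 (Fin (m + 3))),
      e ∈ (cycleGraph (m + 3)).incidenceSet v ↔
        e ∈ ({s(v - 1, v), s(v, v + 1)} : Finset (Sym2 (Fin (m + 3)))) := by
    intro v e
    induction e with
    | h a b =>
      simp only [mk'_mem_incidenceSet_iff, Finset.mem_insert,
        Finset.mem_singleton, Sym2.eq_iff, cycleGraph_adj]
      constructor
      · rintro ⟨h1 | h1, hv⟩ <;> rw [sub_eq_iff_eq_add] at h1 <;> subst h1 <;>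
          rcases hv with rfl | rfl
        · exact Or.inl (Or.inr ⟨rfl, by ring⟩)
        · exact Or.inr (Or.inr ⟨by ring, rfl⟩)
        · exact Or.inr (Or.inl ⟨rfl, by ring⟩)
        · exact Or.inl (Or.inl ⟨by ring, rfl⟩)
      · rintro ((⟨rfl, rfl⟩ | ⟨rfl, rfl⟩) | (⟨rfl, rfl⟩ | ⟨rfl, rfl⟩))
        · exact ⟨Or.inr (by ring), Or.inr rfl⟩
        · exact ⟨Or.inl (by ring), Or.inl rfl⟩
        · exact ⟨Or.inr (by ring), Or.inl rfl⟩
        · exact ⟨Or.inl (by ring), Or.inr rfl⟩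
  have two_ne : (2 : Fin (m + 3)) ≠ 0 := by
    intro h
    have h2 : ((2 : ℕ) : Fin (m + 3)) = 0 := by exact_mod_cast h
    rw [Fin.natCast_eq_zero] at h2
    exact absurd (Nat.le_of_dvd (by norm_num) h2) (by omega)
  have hne : ∀ v : Fin (m + 3), s(v - 1, v) ≠ s(v, v + 1) := by
    intro v h
    rw [Sym2.eq_iff] at h
    rcases h with ⟨h1, h2⟩ | ⟨h1, -⟩
    · exact two_ne (by linear_combination (-2 : Fin (m + 3)) * h2)
    · exact two_ne (by linear_combination -h1)
  -- the alternating function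
  set g : Fin (m + 3) → ZMod (Fintype.card (Fin (m + 3))) :=
    fun i => ((f s(i, i + 1) : ℕ) : ZMod (Fintype.card (Fin (m + 3)))) with hg
  have hrel : ∀ v : Fin (m + 3), g (v - 1) + g v = c := by
    intro v
    have h : ((f s(v - 1, v) + f s(v, v + 1) : ℕ) : ZMod (Fintype.card (Fin (m + 3)))) = c := by
      rw [← hc v]
      congr 1
      rw [← Finset.sum_pair (hne v)]
      refine (Finset.sum_congr ?_ fun _ _ => rfl).symm
      ext e
      rw [SimpleGraph.mem_incidenceFinset]
      exact hmem v e
    have e1 : s(v - 1, v) = s(v - 1, (v - 1) + 1) := by rw [sub_add_cancel]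
    rw [e1] at h
    push_cast at h
    exact h
  have halt : ∀ j : ℕ, g ((j : Fin (m + 3))) = g 0 ∨ g ((j : Fin (m + 3))) = c - g 0 := by
    intro j
    induction j with
    | zero => left; rw [Nat.cast_zero]
    | succ j ih =>
      have h := hrel ((j + 1 : ℕ) : Fin (m + 3))
      rw [Nat.cast_add_one, add_sub_cancel_right] at h
      rcases ih with h' | h' <;> rw [h'] at h
      · right; rw [Nat.cast_add_one]; linear_combination h
      · left; rw [Nat.cast_add_one]; linear_combination h
  have hall : ∀ v : Fin (m + 3), g v = g 0 ∨ g v = c - g 0 := by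
    intro v
    have := halt v.val
    rwa [Fin.cast_val_eq_self] at this
  -- surjectivity of g
  have hsurj : ∀ r : ZMod (Fintype.card (Fin (m + 3))), ∃ v, g v = r := by
    intro r
    set i : ℕ := (r - (k : ZMod (Fintype.card (Fin (m + 3))))).val with hi
    have hcast : ((k + i : ℕ) : ZMod (Fintype.card (Fin (m + 3)))) = r := by
      push_cast [hi]
      rw [ZMod.natCast_rightInverse _]
      ring
    obtain ⟨e, he, hfe⟩ := hbij.surjOn ⟨i, Set.mem_Iio.mpr (by
      rw [hq]; have := ZMod.val_lt (r - (k : ZMod (Fintype.card (Fin (m + 3))))); omega), rfl⟩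
    induction e with
    | h a b =>
      rw [SimpleGraph.mem_edgeSet, cycleGraph_adj] at he
      rcases he with h1 | h1 <;> rw [sub_eq_iff_eq_add] at h1 <;> subst h1
      · refine ⟨b, ?_⟩
        have hsw : s(b, b + 1) = s(1 + b, b) := by rw [add_comm b 1]; exact Sym2.eq_swap
        rw [hg]; simp only []
        rw [hsw, hfe]; exact hcast
      · refine ⟨a, ?_⟩
        have hsw : s(a, a + 1) = s(a, 1 + a) := by rw [add_comm a 1]
        rw [hg]; simp only []
        rw [hsw, hfe]; exact hcast
  -- conclude
  have hsub : (Finset.univ : Finset (ZMod (Fintype.card (Fin (m + 3))))) ⊆ {g 0, c - g 0} := by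
    intro r _
    obtain ⟨v, hv⟩ := hsurj r
    rcases hall v with h | h <;> rw [← hv, h] <;> simp
  have hcard := Finset.card_le_card hsub
  rw [Finset.card_univ, ZMod.card] at hcard
  have h2 : ({g 0, c - g 0} : Finset (ZMod (Fintype.card (Fin (m + 3))))).card ≤ 2 :=
    (Finset.card_insert_le _ _).trans (by simp)
  omega
end
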